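/- arXiv:1103.4135 — 3 statements merged into one kernel-verified Lean document; each statement's English description precedes it below -/
import Mathlib

section
/- Fix s ∈ (0,1/2), a ∈ ℝ, t ∈ ℝ, and a sequence Φ : ℤ → ℂ with Φ_0 = 0 and Σ_{k≠0} |Φ_k|/|k| < ∞; set S_k = Φ_k e^{−i(k³−ak)t}. Define, for a sequence v : ℤ → ℂ with v_0 = 0, K(v)_k = −Σ_{k₁+k₂=k, k₁,k₂≠0} e^{−3ikk₁k₂t} S_{k₁}v_{k₂}/(3k₁k₂) for k ≠ 0 and K(v)_0 = 0. Then there is a constant C, depending only on s and Σ_{k≠0}|Φ_k|/|k|, such that ‖K(v)‖_{H^{−s}} ≤ ‖K(v)‖_{ℓ²} ≤ C‖v‖_{H^{−s}} for every v with ‖v‖_{H^{−s}} < ∞. -/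
noncomputable section

def l2norm (v : ℤ → ℂ) : ℝ := Real.sqrt (∑' k : ℤ, ‖v k‖ ^ 2)

def hnegNorm (s : ℝ) (v : ℤ → ℂ) : ℝ :=
  Real.sqrt (∑' k : ℤ, ‖v k‖ ^ 2 * |(k : ℝ)| ^ (-2 * s))

/-- `K(v)_k = -Σ_{k₁+k₂=k, k₁,k₂≠0} e^{-3ikk₁k₂t} S_{k₁} v_{k₂}/(3k₁k₂)`,
with `S_k = Φ_k e^{-i(k³-ak)t}`. -/
def Kop (a t : ℝ) (Φ : ℤ → ℂ) (v : ℤ → ℂ) (k : ℤ) : ℂ :=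
  if k = 0 then 0 else
    -∑' p : ℤ × ℤ,
      if p.1 + p.2 = k ∧ p.1 ≠ 0 ∧ p.2 ≠ 0 then
        Complex.exp (-3 * Complex.I * (k : ℂ) * (p.1 : ℂ) * (p.2 : ℂ) * (t : ℂ)) *
          (Φ p.1 * Complex.exp (-Complex.I * ((p.1 : ℂ) ^ 3 - (a : ℂ) * (p.1 : ℂ)) * (t : ℂ))) *
          v p.2 / (3 * (p.1 : ℂ) * (p.2 : ℂ))
      else 0

/-- The shear equivalence `(k, j) ↦ (j, k - j)` of `ℤ × ℤ`. -/
def shearEquiv : (ℤ × ℤ) ≃ (ℤ × ℤ) where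
  toFun q := (q.2, q.1 - q.2)
  invFun r := (r.2 + r.1, r.1)
  left_inv q := by simp
  right_inv r := by simp

/-- Cauchy–Schwarz inequality for `tsum`s of nonnegative sequences. -/
lemma my_tsum_cs {f g : ℤ → ℝ} (hf0 : ∀ k, 0 ≤ f k) (hg0 : ∀ k, 0 ≤ g k)
    (hf : Summable (fun k => f k ^ 2)) (hg : Summable (fun k => g k ^ 2)) :
    Summable (fun k => f k * g k) ∧
      (∑' k, f k * g k) ^ 2 ≤ (∑' k, f k ^ 2) * (∑' k, g k ^ 2) := by
  set A := ∑' k, f k ^ 2 with hA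
  set B := ∑' k, g k ^ 2 with hB
  have hA0 : 0 ≤ A := tsum_nonneg fun k => sq_nonneg _
  have hB0 : 0 ≤ B := tsum_nonneg fun k => sq_nonneg _
  have key : ∀ u : Finset ℤ, ∑ k ∈ u, f k * g k ≤ Real.sqrt (A * B) := by
    intro u
    have h1 : (∑ k ∈ u, f k * g k) ^ 2 ≤ (∑ k ∈ u, f k ^ 2) * (∑ k ∈ u, g k ^ 2) :=
      Finset.sum_mul_sq_le_sq_mul_sq u f g
    have h2 : (∑ k ∈ u, f k ^ 2) ≤ A := Summable.sum_le_tsum u (fun k _ => sq_nonneg _) hf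
    have h3 : (∑ k ∈ u, g k ^ 2) ≤ B := Summable.sum_le_tsum u (fun k _ => sq_nonneg _) hg
    have h4 : (∑ k ∈ u, f k * g k) ^ 2 ≤ A * B :=
      h1.trans (mul_le_mul h2 h3 (Finset.sum_nonneg fun k _ => sq_nonneg _) hA0)
    have h5 : 0 ≤ ∑ k ∈ u, f k * g k :=
      Finset.sum_nonneg fun k _ => mul_nonneg (hf0 k) (hg0 k)
    exact (Real.le_sqrt h5 (mul_nonneg hA0 hB0)).mpr h4
  have hsum : Summable (fun k => f k * g k) :=
    summable_of_sum_le (fun k => mul_nonneg (hf0 k) (hg0 k)) key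
  refine ⟨hsum, ?_⟩
  have h6 : (∑' k, f k * g k) ≤ Real.sqrt (A * B) := Summable.tsum_le_of_sum_le hsum key
  have h7 : 0 ≤ ∑' k, f k * g k := tsum_nonneg fun k => mul_nonneg (hf0 k) (hg0 k)
  calc (∑' k, f k * g k) ^ 2 ≤ Real.sqrt (A * B) ^ 2 := pow_le_pow_left₀ h7 h6 2
    _ = A * B := Real.sq_sqrt (mul_nonneg hA0 hB0)

set_option maxHeartbeats 2000000 in
theorem K_apriori_estimate (s M : ℝ) (hs0 : 0 < s) (hs1 : s < 1 / 2) :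
    ∃ C : ℝ, ∀ (a t : ℝ) (Φ : ℤ → ℂ), Φ 0 = 0 →
      Summable (fun k : ℤ => ‖Φ k‖ / |(k : ℝ)|) →
      (∑' k : ℤ, ‖Φ k‖ / |(k : ℝ)|) ≤ M →
      ∀ v : ℤ → ℂ, v 0 = 0 →
        Summable (fun k : ℤ => ‖v k‖ ^ 2 * |(k : ℝ)| ^ (-2 * s)) →
        hnegNorm s (Kop a t Φ v) ≤ l2norm (Kop a t Φ v) ∧
        l2norm (Kop a t Φ v) ≤ C * hnegNorm s v := by
  refine ⟨M / 3, ?_⟩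
  intro a t Φ hΦ0 hΦsum hΦM v hv0 hvsum
  set f : ℤ → ℝ := fun k => ‖Φ k‖ / |(k : ℝ)| with hfdef
  have hf0 : ∀ k, 0 ≤ f k := fun k => div_nonneg (norm_nonneg _) (abs_nonneg _)
  have hM0 : 0 ≤ M := le_trans (tsum_nonneg hf0) hΦM
  set g : ℤ → ℝ := fun k => ‖v k‖ * |(k : ℝ)| ^ (-s) with hgdef
  have hg0 : ∀ k, 0 ≤ g k := fun k =>
    mul_nonneg (norm_nonneg _) (Real.rpow_nonneg (abs_nonneg _) _)
  have hgsq : ∀ k : ℤ, g k ^ 2 = ‖v k‖ ^ 2 * |(k : ℝ)| ^ (-2 * s) := by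
    intro k
    have h2 : (-2 * s) = (-s) * (2 : ℕ) := by push_cast; ring
    rw [hgdef]
    dsimp only
    rw [mul_pow, h2, Real.rpow_mul (abs_nonneg _), Real.rpow_natCast]
  have hgsum : Summable (fun k => g k ^ 2) := (summable_congr fun k => hgsq k).mpr hvsum
  set B := ∑' k : ℤ, g k ^ 2 with hBdef
  have hB0 : 0 ≤ B := tsum_nonneg fun k => sq_nonneg _
  have hBv : hnegNorm s v = Real.sqrt B := by
    rw [hnegNorm, hBdef]
    congr 1
    exact tsum_congr fun k => (hgsq k).symm
  have gle : ∀ k, g k ≤ Real.sqrt B := by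
    intro k
    have h1 : g k ^ 2 ≤ B := Summable.le_tsum hgsum k fun j _ => sq_nonneg _
    calc g k = Real.sqrt (g k ^ 2) := (Real.sqrt_sq (hg0 k)).symm
      _ ≤ Real.sqrt B := Real.sqrt_le_sqrt h1
  have hcv_sum : ∀ k : ℤ, Summable (fun j => f j * g (k - j)) := fun k =>
    Summable.of_nonneg_of_le (fun j => mul_nonneg (hf0 j) (hg0 _))
      (fun j => mul_le_mul_of_nonneg_left (gle _) (hf0 j)) (hΦsum.mul_right _)
  have hW_sum : ∀ k : ℤ, Summable (fun j => f j * g (k - j) ^ 2) := fun k =>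
    Summable.of_nonneg_of_le (fun j => mul_nonneg (hf0 j) (sq_nonneg _))
      (fun j => mul_le_mul_of_nonneg_left (Summable.le_tsum hgsum _ fun i _ => sq_nonneg _) (hf0 j))
      (hΦsum.mul_right _)
  set cv : ℤ → ℝ := fun k => ∑' j : ℤ, f j * g (k - j) with hcvdef
  have hcv0 : ∀ k, 0 ≤ cv k := fun k => tsum_nonneg fun j => mul_nonneg (hf0 j) (hg0 _)
  set W : ℤ → ℝ := fun k => ∑' j : ℤ, f j * g (k - j) ^ 2 with hWdef
  have hW0 : ∀ k, 0 ≤ W k := fun k => tsum_nonneg fun j => mul_nonneg (hf0 j) (sq_nonneg _)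
  -- pointwise bound on `Kop`
  have hKle : ∀ k : ℤ, ‖Kop a t Φ v k‖ ≤ (1 / 3) * cv k := by
    intro k
    by_cases hk : k = 0
    · rw [Kop, if_pos hk, norm_zero]
      exact mul_nonneg (by norm_num) (hcv0 k)
    rw [Kop, if_neg hk, norm_neg]
    set T : ℤ × ℤ → ℂ := fun p =>
      if p.1 + p.2 = k ∧ p.1 ≠ 0 ∧ p.2 ≠ 0 then
        Complex.exp (-3 * Complex.I * (k : ℂ) * (p.1 : ℂ) * (p.2 : ℂ) * (t : ℂ)) *
          (Φ p.1 * Complex.exp (-Complex.I * ((p.1 : ℂ) ^ 3 - (a : ℂ) * (p.1 : ℂ)) * (t : ℂ))) *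
          v p.2 / (3 * (p.1 : ℂ) * (p.2 : ℂ))
      else 0 with hTdef
    set h : ℤ × ℤ → ℝ := fun p =>
      if p.1 + p.2 = k then (1 / 3) * (f p.1 * g p.2) else 0 with hhdef
    have hh0 : ∀ p, 0 ≤ h p := by
      intro p
      rw [hhdef]
      dsimp only
      split
      · exact mul_nonneg (by norm_num) (mul_nonneg (hf0 _) (hg0 _))
      · exact le_rfl
    have hTle : ∀ p : ℤ × ℤ, ‖T p‖ ≤ h p := by
      rintro ⟨p1, p2⟩
      by_cases hc : p1 + p2 = k ∧ p1 ≠ 0 ∧ p2 ≠ 0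
      · obtain ⟨hck, hp1, hp2⟩ := hc
        rw [hTdef, hhdef]
        dsimp only
        rw [if_pos ⟨hck, hp1, hp2⟩, if_pos hck]
        have e1 : (-3 * Complex.I * (k : ℂ) * (p1 : ℂ) * (p2 : ℂ) * (t : ℂ))
            = ((-3 * (k : ℝ) * (p1 : ℝ) * (p2 : ℝ) * t : ℝ) : ℂ) * Complex.I := by
          push_cast; ring
        have e2 : (-Complex.I * ((p1 : ℂ) ^ 3 - (a : ℂ) * (p1 : ℂ)) * (t : ℂ))
            = ((-(((p1 : ℝ)) ^ 3 - a * (p1 : ℝ)) * t : ℝ) : ℂ) * Complex.I := by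
          push_cast; ring
        have hnorm : ‖Complex.exp (-3 * Complex.I * (k : ℂ) * (p1 : ℂ) * (p2 : ℂ) * (t : ℂ)) *
            (Φ p1 * Complex.exp (-Complex.I * ((p1 : ℂ) ^ 3 - (a : ℂ) * (p1 : ℂ)) * (t : ℂ))) *
            v p2 / (3 * (p1 : ℂ) * (p2 : ℂ))‖
            = ‖Φ p1‖ * ‖v p2‖ / (3 * |(p1 : ℝ)| * |(p2 : ℝ)|) := by
          rw [e1, e2, norm_div, norm_mul, norm_mul, norm_mul]
          simp only [Complex.norm_exp_ofReal_mul_I, one_mul, mul_one]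
          congr 1
          simp [Complex.norm_intCast]
        rw [hnorm]
        have hp1' : (0 : ℝ) < |(p1 : ℝ)| := abs_pos.mpr (Int.cast_ne_zero.mpr hp1)
        have hp2' : (0 : ℝ) < |(p2 : ℝ)| := abs_pos.mpr (Int.cast_ne_zero.mpr hp2)
        have h1 : (1 : ℝ) ≤ |(p2 : ℝ)| := by exact_mod_cast Int.one_le_abs hp2
        have h2 : |(p2 : ℝ)| ^ (-(1 : ℝ)) ≤ |(p2 : ℝ)| ^ (-s) :=
          Real.rpow_le_rpow_of_exponent_le h1 (by linarith)
        rw [Real.rpow_neg_one] at h2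
        have heq : ‖Φ p1‖ * ‖v p2‖ / (3 * |(p1 : ℝ)| * |(p2 : ℝ)|)
            = (1 / 3) * (f p1 * (‖v p2‖ * |(p2 : ℝ)|⁻¹)) := by
          rw [hfdef]
          dsimp only
          rw [div_eq_mul_inv, div_eq_mul_inv, mul_inv, mul_inv]
          ring
        rw [heq, hgdef]
        dsimp only
        gcongr
      · rw [hTdef]
        dsimp only
        rw [if_neg hc, norm_zero]
        exact hh0 (p1, p2)
    have hi : Function.Injective (fun j : ℤ => ((j, k - j) : ℤ × ℤ)) := by
      intro x y hxy
      simpa [Prod.ext_iff] using hxy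
    have hsupp : ∀ p : ℤ × ℤ, p ∉ Set.range (fun j : ℤ => ((j, k - j) : ℤ × ℤ)) → h p = 0 := by
      rintro ⟨p1, p2⟩ hp
      rw [hhdef]
      dsimp only
      rw [if_neg]
      intro hc
      exact hp ⟨p1, by simp only [Prod.mk.injEq]; exact ⟨trivial, by omega⟩⟩
    have hsupp' : Function.support h ⊆ Set.range (fun j : ℤ => ((j, k - j) : ℤ × ℤ)) := by
      intro p hp
      by_contra hnot
      exact hp (hsupp p hnot)
    have hhcomp : ∀ j : ℤ, h ((j : ℤ), k - j) = (1 / 3) * (f j * g (k - j)) := by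
      intro j
      rw [hhdef]
      dsimp only
      rw [if_pos (by ring)]
    have hhsum : Summable h := by
      refine (hi.summable_iff hsupp).mp ?_
      exact (summable_congr fun j => hhcomp j).mpr ((hcv_sum k).mul_left _)
    have hTnormsum : Summable (fun p => ‖T p‖) :=
      Summable.of_nonneg_of_le (fun p => norm_nonneg _) hTle hhsum
    have step1 : ‖∑' p, T p‖ ≤ ∑' p, h p :=
      (norm_tsum_le_tsum_norm hTnormsum).trans (Summable.tsum_le_tsum hTle hTnormsum hhsum)
    have step2 : ∑' p, h p = (1 / 3) * cv k := by
      calc ∑' p, h p = ∑' j : ℤ, h (j, k - j) := (hi.tsum_eq hsupp').symm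
        _ = ∑' j : ℤ, (1 / 3) * (f j * g (k - j)) := tsum_congr hhcomp
        _ = (1 / 3) * cv k := tsum_mul_left
    exact step1.trans_eq step2
  -- Cauchy–Schwarz: `cv k ^ 2 ≤ M * W k`
  have hcv_sq : ∀ k : ℤ, cv k ^ 2 ≤ M * W k := by
    intro k
    have ha2 : ∀ j : ℤ, Real.sqrt (f j) ^ 2 = f j := fun j => Real.sq_sqrt (hf0 j)
    have hb2 : ∀ j : ℤ, (Real.sqrt (f j) * g (k - j)) ^ 2 = f j * g (k - j) ^ 2 := by
      intro j
      rw [mul_pow, ha2 j]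
    have hab : ∀ j : ℤ, Real.sqrt (f j) * (Real.sqrt (f j) * g (k - j)) = f j * g (k - j) := by
      intro j
      rw [← mul_assoc, Real.mul_self_sqrt (hf0 j)]
    have hcs := my_tsum_cs (f := fun j => Real.sqrt (f j))
      (g := fun j => Real.sqrt (f j) * g (k - j))
      (fun j => Real.sqrt_nonneg _) (fun j => mul_nonneg (Real.sqrt_nonneg _) (hg0 _))
      ((summable_congr fun j => ha2 j).mpr hΦsum)
      ((summable_congr fun j => hb2 j).mpr (hW_sum k))
    have h1 := hcs.2
    rw [tsum_congr hab, tsum_congr ha2, tsum_congr hb2] at h1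
    calc cv k ^ 2 ≤ (∑' j : ℤ, f j) * W k := h1
      _ ≤ M * W k := mul_le_mul_of_nonneg_right hΦM (hW0 k)
  -- Fubini: `∑ W ≤ M * B`
  have hG : Summable (fun r : ℤ × ℤ => f r.1 * g r.2 ^ 2) :=
    Summable.mul_of_nonneg hΦsum hgsum (fun j => hf0 j) (fun j => sq_nonneg (g j))
  have hGval : ∑' r : ℤ × ℤ, f r.1 * g r.2 ^ 2 = (∑' j : ℤ, f j) * B := by
    rw [Summable.tsum_prod' hG (fun b => hgsum.mul_left (f b))]
    calc ∑' i : ℤ, ∑' j : ℤ, f i * g j ^ 2 = ∑' i : ℤ, f i * B :=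
          tsum_congr fun i => tsum_mul_left
      _ = (∑' j : ℤ, f j) * B := tsum_mul_right
  have hF : Summable (fun q : ℤ × ℤ => f q.2 * g (q.1 - q.2) ^ 2) := by
    have := (Equiv.summable_iff shearEquiv (f := fun r : ℤ × ℤ => f r.1 * g r.2 ^ 2)).mpr hG
    exact this
  have hFval : ∑' q : ℤ × ℤ, f q.2 * g (q.1 - q.2) ^ 2 = (∑' j : ℤ, f j) * B := by
    rw [← hGval]
    exact shearEquiv.tsum_eq (fun r : ℤ × ℤ => f r.1 * g r.2 ^ 2)
  have hWHasSum : HasSum W (∑' q : ℤ × ℤ, f q.2 * g (q.1 - q.2) ^ 2) :=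
    HasSum.prod_fiberwise hF.hasSum (fun b => (hW_sum b).hasSum)
  have hWsum : Summable W := hWHasSum.summable
  have hWtot : ∑' k : ℤ, W k ≤ M * B := by
    rw [hWHasSum.tsum_eq, hFval]
    exact mul_le_mul_of_nonneg_right hΦM hB0
  -- summability and bound for `∑ ‖K‖²`
  have hK2le : ∀ k : ℤ, ‖Kop a t Φ v k‖ ^ 2 ≤ (1 / 9) * (M * W k) := by
    intro k
    calc ‖Kop a t Φ v k‖ ^ 2 ≤ ((1 / 3) * cv k) ^ 2 :=
          pow_le_pow_left₀ (norm_nonneg _) (hKle k) 2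
      _ = (1 / 9) * cv k ^ 2 := by ring
      _ ≤ (1 / 9) * (M * W k) := by
          have := hcv_sq k
          linarith
  have hKsq_sum : Summable (fun k : ℤ => ‖Kop a t Φ v k‖ ^ 2) :=
    Summable.of_nonneg_of_le (fun k => sq_nonneg _) hK2le ((hWsum.mul_left M).mul_left (1 / 9))
  have hKtsum : ∑' k : ℤ, ‖Kop a t Φ v k‖ ^ 2 ≤ (M / 3) ^ 2 * B := by
    calc ∑' k : ℤ, ‖Kop a t Φ v k‖ ^ 2 ≤ ∑' k : ℤ, (1 / 9) * (M * W k) :=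
          Summable.tsum_le_tsum hK2le hKsq_sum ((hWsum.mul_left M).mul_left (1 / 9))
      _ = (1 / 9) * (M * ∑' k : ℤ, W k) := by rw [tsum_mul_left, tsum_mul_left]
      _ ≤ (1 / 9) * (M * (M * B)) := by
          have h9 : (0:ℝ) ≤ 1 / 9 := by norm_num
          exact mul_le_mul_of_nonneg_left (mul_le_mul_of_nonneg_left hWtot hM0) h9
      _ = (M / 3) ^ 2 * B := by ring
  constructor
  · -- `hnegNorm ≤ l2norm`
    rw [hnegNorm, l2norm]
    have hpt : ∀ k : ℤ, ‖Kop a t Φ v k‖ ^ 2 * |(k : ℝ)| ^ (-2 * s) ≤ ‖Kop a t Φ v k‖ ^ 2 := by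
      intro k
      by_cases hk : k = 0
      · subst hk
        rw [Int.cast_zero, abs_zero, Real.zero_rpow (by intro hcon; linarith), mul_zero]
        exact sq_nonneg _
      · have h1 : |(k : ℝ)| ^ (-2 * s) ≤ 1 :=
          Real.rpow_le_one_of_one_le_of_nonpos
            (by exact_mod_cast Int.one_le_abs hk) (by linarith)
        exact mul_le_of_le_one_right (sq_nonneg _) h1
    have hls : Summable (fun k : ℤ => ‖Kop a t Φ v k‖ ^ 2 * |(k : ℝ)| ^ (-2 * s)) :=
      Summable.of_nonneg_of_le
        (fun k => mul_nonneg (sq_nonneg _) (Real.rpow_nonneg (abs_nonneg _) _)) hpt hKsq_sum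
    exact Real.sqrt_le_sqrt (Summable.tsum_le_tsum hpt hls hKsq_sum)
  · rw [l2norm, hBv]
    calc Real.sqrt (∑' k : ℤ, ‖Kop a t Φ v k‖ ^ 2) ≤ Real.sqrt ((M / 3) ^ 2 * B) :=
          Real.sqrt_le_sqrt hKtsum
      _ = (M / 3) * Real.sqrt B := by
          rw [Real.sqrt_mul (sq_nonneg _), Real.sqrt_sq (by positivity)]
end
end

section
/- Let a, b be real numbers with a ≥ b > 1. Then there exists a constant C, depending only on a and b, such that for all integers n₁ ≠ n₂: Σ_{m ∈ ℤ, m ≠ n₁, m ≠ n₂} |n₁ − m|^{−a} |n₂ − m|^{−b} ≤ C |n₁ − n₂|^{−b}. -/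
theorem convolution_sum_estimate (a b : ℝ) (hb : 1 < b) (hab : b ≤ a) :
    ∃ C : ℝ, ∀ n₁ n₂ : ℤ, n₁ ≠ n₂ →
      (∑' m : ℤ, if m ≠ n₁ ∧ m ≠ n₂ then
          |((n₁ - m : ℤ) : ℝ)| ^ (-a) * |((n₂ - m : ℤ) : ℝ)| ^ (-b)
        else 0) ≤ C * |((n₁ - n₂ : ℤ) : ℝ)| ^ (-b) := by
  have ha : 1 < a := lt_of_lt_of_le hb hab
  have Sa : Summable fun k : ℤ => |(k : ℝ)| ^ (-a) := Real.summable_abs_int_rpow ha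
  have Sb : Summable fun k : ℤ => |(k : ℝ)| ^ (-b) := Real.summable_abs_int_rpow hb
  refine ⟨(2:ℝ)^a * ((∑' k : ℤ, |(k:ℝ)|^(-a)) + ∑' k : ℤ, |(k:ℝ)|^(-b)), ?_⟩
  intro n₁ n₂ hne
  set D := |((n₁ - n₂ : ℤ) : ℝ)| with hDdef
  have hD1 : (1:ℝ) ≤ D := by
    have h0 : n₁ - n₂ ≠ 0 := sub_ne_zero.mpr hne
    have := Int.one_le_abs h0
    rw [hDdef, ← Int.cast_abs]
    exact_mod_cast this
  have hD0 : (0:ℝ) < D := lt_of_lt_of_le one_pos hD1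
  set G : ℤ → ℝ := fun m => |((n₁ - m : ℤ) : ℝ)| ^ (-a) with hGdef
  set H : ℤ → ℝ := fun m => |((n₂ - m : ℤ) : ℝ)| ^ (-b) with hHdef
  have hGsum : Summable G := by
    have := (Equiv.subLeft n₁).summable_iff.mpr Sa
    simpa [Function.comp_def, hGdef] using this
  have hHsum : Summable H := by
    have := (Equiv.subLeft n₂).summable_iff.mpr Sb
    simpa [Function.comp_def, hHdef] using this
  have hGts : ∑' m, G m = ∑' k : ℤ, |(k:ℝ)|^(-a) := by
    rw [← (Equiv.subLeft n₁).tsum_eq (fun k : ℤ => |(k:ℝ)|^(-a))]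
    exact tsum_congr fun m => by simp [hGdef, Equiv.subLeft_apply]
  have hHts : ∑' m, H m = ∑' k : ℤ, |(k:ℝ)|^(-b) := by
    rw [← (Equiv.subLeft n₂).tsum_eq (fun k : ℤ => |(k:ℝ)|^(-b))]
    exact tsum_congr fun m => by simp [hHdef, Equiv.subLeft_apply]
  set F : ℤ → ℝ := fun m => if m ≠ n₁ ∧ m ≠ n₂ then
      |((n₁ - m : ℤ) : ℝ)| ^ (-a) * |((n₂ - m : ℤ) : ℝ)| ^ (-b) else 0 with hFdef
  have hFnonneg : ∀ m, 0 ≤ F m := by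
    intro m
    rw [hFdef]
    dsimp only
    split
    · positivity
    · exact le_rfl
  have key : ∀ m, F m ≤ (2:ℝ)^a * D^(-b) * (G m + H m) := by
    intro m
    by_cases hm : m ≠ n₁ ∧ m ≠ n₂
    · have hx1 : (1:ℝ) ≤ |((n₁ - m : ℤ) : ℝ)| := by
        have := Int.one_le_abs (sub_ne_zero.mpr (Ne.symm hm.1))
        rw [← Int.cast_abs]; exact_mod_cast this
      have hy1 : (1:ℝ) ≤ |((n₂ - m : ℤ) : ℝ)| := by
        have := Int.one_le_abs (sub_ne_zero.mpr (Ne.symm hm.2))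
        rw [← Int.cast_abs]; exact_mod_cast this
      have hx0 : (0:ℝ) < |((n₁ - m : ℤ) : ℝ)| := lt_of_lt_of_le one_pos hx1
      have hy0 : (0:ℝ) < |((n₂ - m : ℤ) : ℝ)| := lt_of_lt_of_le one_pos hy1
      have htri : D ≤ |((n₁ - m : ℤ) : ℝ)| + |((n₂ - m : ℤ) : ℝ)| := by
        have : ((n₁ - n₂ : ℤ) : ℝ) = ((n₁ - m : ℤ) : ℝ) - ((n₂ - m : ℤ) : ℝ) := by
          push_cast; ring
        rw [hDdef, this]
        exact abs_sub _ _
      have hF : F m = G m * H m := by rw [hFdef]; simp [hm, hGdef, hHdef]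
      have hG0 : 0 ≤ G m := by rw [hGdef]; positivity
      have hH0 : 0 ≤ H m := by rw [hHdef]; positivity
      have h2a : (0:ℝ) < (2:ℝ)^a := Real.rpow_pos_of_pos two_pos a
      have hDb : (0:ℝ) < D^(-b) := Real.rpow_pos_of_pos hD0 _
      rcases le_or_gt (D/2) |((n₁ - m : ℤ) : ℝ)| with hcase | hcase
      · -- G m ≤ 2^a * D^(-b)
        have hGle : G m ≤ (2:ℝ)^a * D^(-b) := by
          have h1 : |((n₁ - m : ℤ) : ℝ)| ^ (-a) ≤ (D/2) ^ (-a) :=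
            Real.rpow_le_rpow_of_nonpos (by linarith) hcase (by linarith)
          have h2 : (D/2) ^ (-a) = (2:ℝ)^a * D^(-a) := by
            rw [Real.div_rpow hD0.le (by norm_num : (0:ℝ) ≤ 2),
              Real.rpow_neg (by norm_num : (0:ℝ) ≤ 2), div_eq_mul_inv, inv_inv, mul_comm]
          have h3 : D^(-a) ≤ D^(-b) :=
            Real.rpow_le_rpow_of_exponent_le hD1 (neg_le_neg hab)
          calc G m ≤ (D/2)^(-a) := h1
            _ = (2:ℝ)^a * D^(-a) := h2
            _ ≤ (2:ℝ)^a * D^(-b) := by nlinarith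
        calc F m = G m * H m := hF
          _ ≤ ((2:ℝ)^a * D^(-b)) * H m := mul_le_mul_of_nonneg_right hGle hH0
          _ ≤ (2:ℝ)^a * D^(-b) * (G m + H m) := by nlinarith
      · have hy : D/2 ≤ |((n₂ - m : ℤ) : ℝ)| := by linarith
        have hHle : H m ≤ (2:ℝ)^a * D^(-b) := by
          have h1 : |((n₂ - m : ℤ) : ℝ)| ^ (-b) ≤ (D/2) ^ (-b) :=
            Real.rpow_le_rpow_of_nonpos (by linarith) hy (by linarith)
          have h2 : (D/2) ^ (-b) = (2:ℝ)^b * D^(-b) := by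
            rw [Real.div_rpow hD0.le (by norm_num : (0:ℝ) ≤ 2),
              Real.rpow_neg (by norm_num : (0:ℝ) ≤ 2), div_eq_mul_inv, inv_inv, mul_comm]
          have h3 : (2:ℝ)^b ≤ (2:ℝ)^a :=
            Real.rpow_le_rpow_of_exponent_le one_le_two hab
          calc H m ≤ (D/2)^(-b) := h1
            _ = (2:ℝ)^b * D^(-b) := h2
            _ ≤ (2:ℝ)^a * D^(-b) := by nlinarith
        calc F m = G m * H m := hF
          _ ≤ G m * ((2:ℝ)^a * D^(-b)) := mul_le_mul_of_nonneg_left hHle hG0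
          _ ≤ (2:ℝ)^a * D^(-b) * (G m + H m) := by nlinarith
    · have : F m = 0 := by rw [hFdef]; simp [hm]
      rw [this]
      have hG0 : 0 ≤ G m := by rw [hGdef]; positivity
      have hH0 : 0 ≤ H m := by rw [hHdef]; positivity
      positivity
  have hBsum : Summable fun m => (2:ℝ)^a * D^(-b) * (G m + H m) :=
    ((hGsum.add hHsum).mul_left _)
  have hFsum : Summable F := Summable.of_nonneg_of_le hFnonneg key hBsum
  have hle : ∑' m, F m ≤ ∑' m, (2:ℝ)^a * D^(-b) * (G m + H m) :=
    Summable.tsum_le_tsum key hFsum hBsum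
  have heq : ∑' m, (2:ℝ)^a * D^(-b) * (G m + H m)
      = (2:ℝ)^a * ((∑' k : ℤ, |(k:ℝ)|^(-a)) + ∑' k : ℤ, |(k:ℝ)|^(-b)) * D^(-b) := by
    rw [tsum_mul_left, Summable.tsum_add hGsum hHsum, hGts, hHts]
    ring
  calc (∑' m, F m) ≤ _ := hle
    _ = _ := heq
end

section
/- There exists a₀ > 0 such that for every a ≥ a₀ there is a nonconstant, 2π-periodic, twice continuously differentiable function f : ℝ → ℝ satisfying f''(x) + f(x)²/2 = a for all x ∈ ℝ. (Consequently q(x,t) = f(x) is a stationary 2π-periodic traveling-wave (cnoidal) solution of the KdV equation q_t + q_xxx + q q_x = 0.) -/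
open Real MeasureTheory intervalIntegral Filter Set

namespace CnoidalAux


set_option maxHeartbeats 1000000 in
lemma exists_param (a : ℝ) (ha : 1 ≤ a) :
    ∃ s A m : ℝ, 0 < A ∧ 0 < m ∧ A ^ 2 = 24 * a - 3 * s ^ 2 ∧ m = (3 * s - A) / 2 ∧
      (∫ y in (0:ℝ)..(π/2), 2 * Real.sqrt 3 / Real.sqrt (A + m * Real.sin y ^ 2)) = π := by
  have hpi := Real.pi_gt_three
  have hsqa : 1 ≤ Real.sqrt a := by
    rw [show (1:ℝ) = Real.sqrt 1 by simp]
    exact Real.sqrt_le_sqrt ha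
  set u : ℝ := Real.exp (-(π * Real.sqrt (7 * Real.sqrt a)) / Real.sqrt 6 - 1) with hu_def
  have hu0 : 0 < u := Real.exp_pos _
  have hu1 : u < 1 := by
    rw [hu_def, Real.exp_lt_one_iff]
    have h1 : 0 ≤ π * Real.sqrt (7 * Real.sqrt a) := by positivity
    have h2 : 0 < Real.sqrt 6 := Real.sqrt_pos.mpr (by norm_num)
    have := div_nonneg h1 h2.le
    linarith [neg_div (Real.sqrt 6) (π * Real.sqrt (7 * Real.sqrt a))]
  set v : ℝ := u^2/2 with hv_def
  have hv0 : 0 < v := by positivity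
  set D : ℝ → ℝ := fun s' => Real.sqrt (24*a - 3*s'^2) with hD_def
  set mf : ℝ → ℝ := fun s' => (3*s' - D s')/2 with hmf_def
  set K : ℝ → ℝ → ℝ := fun s' y =>
    2*Real.sqrt 3 / Real.sqrt (max v (D s' + mf s' * Real.sin y^2)) with hK_def
  set T : ℝ → ℝ := fun s' => ∫ y in (0:ℝ)..(π/2), K s' y with hT_def
  have hKcont : Continuous (Function.uncurry K) := by
    apply Continuous.div continuous_const
    · apply Continuous.sqrt
      apply Continuous.max continuous_const
      fun_prop
    · intro p
      have : v ≤ max v (D p.1 + mf p.1 * Real.sin p.2^2) := le_max_left _ _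
      exact (Real.sqrt_pos.mpr (lt_of_lt_of_le hv0 this)).ne'
  have hKy : ∀ s', Continuous (K s') := by
    intro s'
    rw [hK_def]
    apply Continuous.div continuous_const
    · apply Continuous.sqrt
      apply Continuous.max continuous_const
      fun_prop
    · intro y
      have : v ≤ max v (D s' + mf s' * Real.sin y^2) := le_max_left _ _
      exact (Real.sqrt_pos.mpr (lt_of_lt_of_le hv0 this)).ne'
  have hKpos : ∀ s' y, 0 < K s' y := by
    intro s' y
    have : v ≤ max v (D s' + mf s' * Real.sin y^2) := le_max_left _ _
    have h2 := Real.sqrt_pos.mpr (lt_of_lt_of_le hv0 this)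
    have h3 : (0:ℝ) < Real.sqrt 3 := Real.sqrt_pos.mpr (by norm_num)
    simp only [hK_def]
    positivity
  have hTcont : Continuous T :=
    intervalIntegral.continuous_parametric_intervalIntegral_of_continuous' hKcont _ _
  set s₁ : ℝ := Real.sqrt (2*a+1) with hs₁_def
  set s₂ : ℝ := Real.sqrt (8*a - u^4/3) with hs₂_def
  have hu4 : u^4 ≤ 1 := le_of_lt (pow_lt_one₀ hu0.le hu1 (by norm_num))
  have hs₁sq : s₁^2 = 2*a+1 := Real.sq_sqrt (by linarith)
  have hs₂sq : s₂^2 = 8*a - u^4/3 := Real.sq_sqrt (by nlinarith)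
  have hs₁pos : 0 < s₁ := Real.sqrt_pos.mpr (by linarith)
  have hs12 : s₁ ≤ s₂ := Real.sqrt_le_sqrt (by nlinarith)
  -- properties on Icc s₁ s₂
  have hmem : ∀ s' ∈ Icc s₁ s₂, 0 < s' ∧ u^2 ≤ D s' ∧ D s' < 3*s' ∧ 0 < mf s' := by
    intro s' hs'
    obtain ⟨hl, hr⟩ := hs'
    have hspos : 0 < s' := lt_of_lt_of_le hs₁pos hl
    have hlow : 2*a+1 ≤ s'^2 := by
      calc 2*a+1 = s₁^2 := hs₁sq.symm
      _ ≤ s'^2 := by nlinarith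
    have hhi : s'^2 ≤ 8*a - u^4/3 := by
      calc s'^2 ≤ s₂^2 := by nlinarith [hs₂sq, hs12]
      _ = 8*a - u^4/3 := hs₂sq
    have hDlow : u^2 ≤ D s' := by
      have h1 : u^4 ≤ 24*a - 3*s'^2 := by nlinarith
      have h2 : Real.sqrt (u^4) = u^2 := by
        rw [show u^4 = (u^2)^2 by ring, Real.sqrt_sq (sq_nonneg u)]
      rw [← h2]
      exact Real.sqrt_le_sqrt h1
    have hDlt : D s' < 3*s' := by
      rw [hD_def]
      rw [show (fun s' => Real.sqrt (24*a - 3*s'^2)) s' = Real.sqrt (24*a - 3*s'^2) from rfl]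
      rw [Real.sqrt_lt' (by linarith)]
      nlinarith
    refine ⟨hspos, hDlow, hDlt, ?_⟩
    simp only [hmf_def]
    linarith
  have hgmax : ∀ s' ∈ Icc s₁ s₂, ∀ y, max v (D s' + mf s' * Real.sin y^2)
      = D s' + mf s' * Real.sin y^2 := by
    intro s' hs' y
    obtain ⟨_, hD, _, hmf⟩ := hmem s' hs'
    apply max_eq_right
    have h1 : 0 ≤ mf s' * Real.sin y^2 := by positivity
    nlinarith
  have h30 : (0:ℝ) < Real.sqrt 3 := Real.sqrt_pos.mpr (by norm_num)
  have h60 : (0:ℝ) < Real.sqrt 6 := Real.sqrt_pos.mpr (by norm_num)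
  -- T s₁ < π
  have hTs₁ : T s₁ < π := by
    have hs₁mem : s₁ ∈ Icc s₁ s₂ := ⟨le_refl _, hs12⟩
    have hD₁ : D s₁ = Real.sqrt (18*a - 3) := by
      have h1 : 24*a - 3*s₁^2 = 18*a - 3 := by rw [hs₁sq]; ring
      show Real.sqrt (24*a - 3*s₁^2) = _
      rw [h1]
    have h3D : 3 < D s₁ := by
      rw [hD₁]
      exact (Real.lt_sqrt (by norm_num)).mpr (by nlinarith)
    have hDpos : (0:ℝ) < D s₁ := by linarith
    have hsD : Real.sqrt 3 < Real.sqrt (D s₁) := Real.sqrt_lt_sqrt (by norm_num) h3D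
    have hsDpos : 0 < Real.sqrt (D s₁) := Real.sqrt_pos.mpr hDpos
    have hb : ∀ y ∈ Icc (0:ℝ) (π/2), K s₁ y ≤ 2*Real.sqrt 3/Real.sqrt (D s₁) := by
      intro y _
      simp only [hK_def]
      rw [hgmax s₁ hs₁mem y]
      have hge : D s₁ ≤ D s₁ + mf s₁ * Real.sin y^2 := by
        have := (hmem s₁ hs₁mem).2.2.2
        nlinarith [sq_nonneg (Real.sin y)]
      exact div_le_div_of_nonneg_left (by positivity) hsDpos (Real.sqrt_le_sqrt hge)
    have hint : T s₁ ≤ (π/2 - 0) * (2*Real.sqrt 3/Real.sqrt (D s₁)) := by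
      have h2 := intervalIntegral.integral_mono_on (by positivity : (0:ℝ) ≤ π/2)
        ((hKy s₁).intervalIntegrable _ _) (intervalIntegrable_const : IntervalIntegrable (fun _ => 2*Real.sqrt 3/Real.sqrt (D s₁)) volume 0 (π/2)) hb
      rw [intervalIntegral.integral_const] at h2
      simpa using h2
    have hkey : 2*Real.sqrt 3/Real.sqrt (D s₁) < 2 := by
      rw [div_lt_iff₀ hsDpos]
      nlinarith
    calc T s₁ ≤ (π/2 - 0) * (2*Real.sqrt 3/Real.sqrt (D s₁)) := hint
    _ < (π/2) * 2 := by
        rw [sub_zero]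
        exact mul_lt_mul_of_pos_left hkey (by positivity)
    _ = π := by ring
  -- π < T s₂
  have hs₂mem : s₂ ∈ Icc s₁ s₂ := ⟨hs12, le_refl _⟩
  have hD₂ : D s₂ = u^2 := by
    have h1 : 24*a - 3*s₂^2 = u^4 := by rw [hs₂sq]; ring
    show Real.sqrt (24*a - 3*s₂^2) = _
    rw [h1, show u^4 = (u^2)^2 by ring, Real.sqrt_sq (sq_nonneg u)]
  set Bb : ℝ := 7*Real.sqrt a with hBb_def
  have hBb1 : 1 ≤ Bb := by simp only [hBb_def]; linarith
  have hBbpos : 0 < Bb := by linarith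
  have hsqBb : 0 < Real.sqrt Bb := Real.sqrt_pos.mpr hBbpos
  have hupi2 : u ≤ π/2 := by nlinarith
  have hmf₂ : mf s₂ ≤ Bb - 1 := by
    have hs₂le : s₂ ≤ 3*Real.sqrt a := by
      have h1 : 8*a - u^4/3 ≤ 9*a := by nlinarith
      have h2 : Real.sqrt (9*a) = 3*Real.sqrt a := by
        rw [show (9:ℝ)*a = 3^2*a by norm_num, Real.sqrt_mul (by positivity),
          Real.sqrt_sq (by norm_num : (0:ℝ) ≤ 3)]
      calc s₂ ≤ Real.sqrt (9*a) := Real.sqrt_le_sqrt h1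
      _ = 3*Real.sqrt a := h2
    have hD₂pos : 0 ≤ D s₂ := by rw [hD₂]; positivity
    simp only [hmf_def, hBb_def]
    nlinarith
  have hlb : ∀ y ∈ Icc u (π/2), 2*Real.sqrt 3/Real.sqrt Bb * (1/y) ≤ K s₂ y := by
    intro y hy
    obtain ⟨hy1, hy2⟩ := hy
    have hy0 : 0 < y := lt_of_lt_of_le hu0 hy1
    have hsiny : Real.sin y ^ 2 ≤ y^2 := by
      have h1 : 0 ≤ Real.sin y := Real.sin_nonneg_of_nonneg_of_le_pi hy0.le (by linarith)
      have h2 : Real.sin y ≤ y := Real.sin_le hy0.le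
      nlinarith
    have hmfpos := (hmem s₂ hs₂mem).2.2.2
    have hgle : D s₂ + mf s₂ * Real.sin y^2 ≤ Bb * y^2 := by
      have h3 : u^2 ≤ y^2 := by nlinarith
      have h4 : mf s₂ * Real.sin y^2 ≤ (Bb-1) * y^2 := by nlinarith
      rw [hD₂]; nlinarith
    have hgpos : 0 < D s₂ + mf s₂ * Real.sin y^2 := by
      rw [hD₂]; nlinarith [sq_nonneg (Real.sin y), sq_nonneg u, pow_pos hu0 2]
    have h5 : Real.sqrt (D s₂ + mf s₂ * Real.sin y^2) ≤ Real.sqrt Bb * y := by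
      calc Real.sqrt (D s₂ + mf s₂ * Real.sin y^2) ≤ Real.sqrt (Bb*y^2) :=
        Real.sqrt_le_sqrt hgle
      _ = Real.sqrt Bb * y := by rw [Real.sqrt_mul hBbpos.le, Real.sqrt_sq hy0.le]
    simp only [hK_def]
    rw [hgmax s₂ hs₂mem y]
    have hstep1 : 2*Real.sqrt 3/Real.sqrt Bb * (1/y) = 2*Real.sqrt 3/(Real.sqrt Bb * y) := by
      rw [mul_one_div, div_div]
    have hstep2 : 2*Real.sqrt 3/(Real.sqrt Bb * y) ≤
        2*Real.sqrt 3/Real.sqrt (D s₂ + mf s₂ * Real.sin y^2) := by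
      exact div_le_div_of_nonneg_left (by positivity) (Real.sqrt_pos.mpr hgpos) h5
    rw [hstep1]
    exact hstep2
  have h0notin : (0:ℝ) ∉ Set.uIcc u (π/2) := by
    rw [Set.uIcc_of_le hupi2]
    intro h
    exact absurd h.1 (by linarith)
  have hcontdiv : ContinuousOn (fun y : ℝ => 2*Real.sqrt 3/Real.sqrt Bb * (1/y))
      (Set.uIcc u (π/2)) := by
    apply ContinuousOn.mul continuousOn_const
    apply ContinuousOn.div continuousOn_const continuousOn_id
    intro y hy h
    simp only [id] at h
    rw [h] at hy
    exact h0notin hy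
  have hint2 : (∫ y in u..(π/2), 2*Real.sqrt 3/Real.sqrt Bb * (1/y)) ≤
      ∫ y in u..(π/2), K s₂ y :=
    intervalIntegral.integral_mono_on hupi2 (hcontdiv.intervalIntegrable)
      ((hKy s₂).intervalIntegrable _ _) hlb
  have hval : (∫ y in u..(π/2), 2*Real.sqrt 3/Real.sqrt Bb * (1/y)) =
      2*Real.sqrt 3/Real.sqrt Bb * Real.log ((π/2)/u) := by
    rw [intervalIntegral.integral_const_mul, integral_one_div h0notin]
  have hlog : π * Real.sqrt Bb / Real.sqrt 6 ≤ Real.log ((π/2)/u) := by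
    rw [Real.log_div (by positivity) hu0.ne']
    rw [hu_def, Real.log_exp]
    have h1 : 0 ≤ Real.log (π/2) := Real.log_nonneg (by linarith)
    have h2 := neg_div (Real.sqrt 6) (π * Real.sqrt Bb)
    simp only [hBb_def] at *
    linarith [h2]
  have hTs₂ : π < T s₂ := by
    have h62 : Real.sqrt 6 < 2*Real.sqrt 3 := by
      rw [show 2*Real.sqrt 3 = Real.sqrt 12 by
        rw [show (12:ℝ) = 2^2*3 by norm_num, Real.sqrt_mul (by positivity),
          Real.sqrt_sq (by norm_num : (0:ℝ) ≤ 2)]]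
      exact Real.sqrt_lt_sqrt (by norm_num) (by norm_num)
    have hkey : π < 2*Real.sqrt 3/Real.sqrt Bb * (π * Real.sqrt Bb / Real.sqrt 6) := by
      have heq : 2*Real.sqrt 3/Real.sqrt Bb * (π * Real.sqrt Bb / Real.sqrt 6)
          = 2*Real.sqrt 3*π/Real.sqrt 6 := by field_simp
      rw [heq, lt_div_iff₀ h60]
      nlinarith [Real.pi_pos]
    have hmono : 2*Real.sqrt 3/Real.sqrt Bb * (π * Real.sqrt Bb / Real.sqrt 6) ≤
        2*Real.sqrt 3/Real.sqrt Bb * Real.log ((π/2)/u) := by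
      apply mul_le_mul_of_nonneg_left hlog (by positivity)
    have hsplit : (∫ y in (0:ℝ)..u, K s₂ y) + (∫ y in u..(π/2), K s₂ y) = T s₂ :=
      intervalIntegral.integral_add_adjacent_intervals
        ((hKy s₂).intervalIntegrable _ _) ((hKy s₂).intervalIntegrable _ _)
    have hnn : 0 ≤ ∫ y in (0:ℝ)..u, K s₂ y :=
      intervalIntegral.integral_nonneg hu0.le (fun y _ => (hKpos s₂ y).le)
    calc π < 2*Real.sqrt 3/Real.sqrt Bb * (π * Real.sqrt Bb / Real.sqrt 6) := hkey
    _ ≤ 2*Real.sqrt 3/Real.sqrt Bb * Real.log ((π/2)/u) := hmono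
    _ = ∫ y in u..(π/2), 2*Real.sqrt 3/Real.sqrt Bb * (1/y) := hval.symm
    _ ≤ ∫ y in u..(π/2), K s₂ y := hint2
    _ ≤ T s₂ := by linarith
  -- IVT
  obtain ⟨s₀, hs₀mem, hTs₀⟩ := intermediate_value_Icc hs12 hTcont.continuousOn
    (Set.mem_Icc.mpr ⟨hTs₁.le, hTs₂.le⟩)
  obtain ⟨hs0pos, hD0, hD0lt, hmf0⟩ := hmem s₀ hs₀mem
  have hu2pos : (0:ℝ) < u^2 := by positivity
  have h24 : 0 ≤ 24*a - 3*s₀^2 := by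
    have h1 : s₀^2 ≤ s₂^2 := pow_le_pow_left₀ hs0pos.le hs₀mem.2 2
    linarith [pow_pos hu0 4, hs₂sq]
  have hA2 : D s₀ ^ 2 = 24*a - 3*s₀^2 := Real.sq_sqrt h24
  have hmeq : mf s₀ = (3*s₀ - D s₀)/2 := by rw [hmf_def]
  have hcong : ∀ y ∈ Set.uIcc (0:ℝ) (π/2),
      2 * Real.sqrt 3 / Real.sqrt (D s₀ + mf s₀ * Real.sin y ^ 2) = K s₀ y := by
    intro y _
    simp only [hK_def]
    rw [hgmax s₀ hs₀mem y]
  have hintegral : (∫ y in (0:ℝ)..(π/2),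
      2 * Real.sqrt 3 / Real.sqrt (D s₀ + mf s₀ * Real.sin y ^ 2)) = π := by
    rw [intervalIntegral.integral_congr hcong]
    exact hTs₀
  exact ⟨s₀, D s₀, mf s₀, lt_of_lt_of_le hu2pos hD0, hmf0, hA2, hmeq, hintegral⟩



lemma construct (a s A m : ℝ) (hA : 0 < A) (hm : 0 < m)
    (hAs : A ^ 2 = 24 * a - 3 * s ^ 2) (hms : m = (3 * s - A) / 2)
    (hT : (∫ y in (0:ℝ)..(π/2), 2 * Real.sqrt 3 / Real.sqrt (A + m * Real.sin y ^ 2)) = π) :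
    ∃ f : ℝ → ℝ, ContDiff ℝ 2 f ∧ (∀ x, f (x + 2 * π) = f x) ∧
      (∃ x y, f x ≠ f y) ∧ ∀ x, iteratedDeriv 2 f x + (f x) ^ 2 / 2 = a := by
  have h3 : (0:ℝ) < Real.sqrt 3 := Real.sqrt_pos.mpr (by norm_num)
  set gg : ℝ → ℝ := fun y => A + m * Real.sin y ^ 2 with hgg_def
  have hggpos : ∀ y, 0 < gg y := fun y => by
    have := sq_nonneg (Real.sin y); have := hm.le; positivity
  have hggcont : Continuous gg := by fun_prop
  set F : ℝ → ℝ := fun y => 2 * Real.sqrt 3 / Real.sqrt (gg y) with hF_def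
  have hFcont : Continuous F := by
    apply Continuous.div continuous_const (hggcont.sqrt)
    exact fun y => (Real.sqrt_pos.mpr (hggpos y)).ne'
  have hFpos : ∀ y, 0 < F y := fun y => by
    have := Real.sqrt_pos.mpr (hggpos y); positivity
  have hFper : ∀ y, F (y + π) = F y := fun y => by
    simp only [hF_def, hgg_def, Real.sin_add_pi, neg_sq]
  set G : ℝ → ℝ := fun x => ∫ y in (0:ℝ)..x, F y with hG_def
  have hGder : ∀ x, HasDerivAt G (F x) x := fun x =>
    intervalIntegral.integral_hasDerivAt_right (hFcont.intervalIntegrable _ _)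
      (hFcont.stronglyMeasurableAtFilter _ _) hFcont.continuousAt
  have hGcont : Continuous G :=
    continuous_iff_continuousAt.mpr fun x => (hGder x).continuousAt
  have hGmono : StrictMono G := strictMono_of_deriv_pos (fun x => by
    rw [(hGder x).deriv]; exact hFpos x)
  -- G π = 2π
  have hGhalf : G π = 2 * π := by
    have hsplit : (∫ y in (0:ℝ)..(π/2), F y) + (∫ y in (π/2)..π, F y) = G π :=
      intervalIntegral.integral_add_adjacent_intervals
        (hFcont.intervalIntegrable _ _) (hFcont.intervalIntegrable _ _)
    have hsub : (∫ y in (π/2)..π, F y) = ∫ y in (0:ℝ)..(π/2), F y := by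
      have := intervalIntegral.integral_comp_sub_left (a := (0:ℝ)) (b := π/2) F π
      rw [show π - π/2 = π/2 by ring, show π - (0:ℝ) = π by ring] at this
      rw [← this]
      apply intervalIntegral.integral_congr
      intro y _
      simp only [hF_def, hgg_def, Real.sin_pi_sub]
    have hTv : (∫ y in (0:ℝ)..(π/2), F y) = π := hT
    rw [← hsplit, hsub, hTv]; ring
  have hGshift : ∀ x, G (x + π) = G x + 2 * π := by
    intro x
    have hsplit : G x + (∫ y in x..(x+π), F y) = G (x + π) :=
      intervalIntegral.integral_add_adjacent_intervals
        (hFcont.intervalIntegrable _ _) (hFcont.intervalIntegrable _ _)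
    have hper : (∫ y in x..(x+π), F y) = ∫ y in (0:ℝ)..(0+π), F y :=
      Function.Periodic.intervalIntegral_add_eq hFper x 0
    rw [← hsplit, hper, zero_add]
    rw [show (∫ y in (0:ℝ)..π, F y) = 2*π from hGhalf]
  have hGzero : G 0 = 0 := intervalIntegral.integral_same
  have hGnat : ∀ n : ℕ, G (n * π) = 2 * π * n ∧ G (-(n * π)) = -(2 * π * n) := by
    intro n
    induction n with
    | zero => simp [hGzero]
    | succ k ih =>
      constructor
      · have : ((k:ℝ)+1) * π = k * π + π := by ring
        push_cast; rw [this, hGshift]; rw [ih.1]; ring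
      · have h1 : (-(((k:ℝ)+1) * π)) + π = -(k * π) := by ring
        have := hGshift (-(((k:ℝ)+1) * π))
        rw [h1, ih.2] at this
        push_cast; linarith
  have hGsurj : Function.Surjective G := by
    intro z
    obtain ⟨n, hn⟩ := exists_nat_ge (|z| / (2 * π))
    have hpi := Real.pi_pos
    have hz : |z| ≤ 2 * π * n := by
      rw [div_le_iff₀ (by positivity)] at hn; linarith [hn]
    have h1 : G (-(n * π)) ≤ z := by
      rw [(hGnat n).2]; cases abs_le.mp hz with | intro h _ => linarith
    have h2 : z ≤ G (n * π) := by
      rw [(hGnat n).1]; exact (abs_le.mp hz).2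
    have := intermediate_value_Icc (by nlinarith : -((n:ℝ) * π) ≤ n * π)
      hGcont.continuousOn (Set.mem_Icc.mpr ⟨h1, h2⟩)
    obtain ⟨x, _, hx⟩ := this
    exact ⟨x, hx⟩
  set E := StrictMono.orderIsoOfSurjective G hGmono hGsurj with hE_def
  set φ : ℝ → ℝ := fun x => E.symm x with hφ_def
  have hφG : ∀ y, φ (G y) = y := fun y =>
    StrictMono.orderIsoOfSurjective_symm_apply_self G hGmono hGsurj y
  have hGφ : ∀ x, G (φ x) = x := fun x =>
    StrictMono.orderIsoOfSurjective_self_symm_apply G hGmono hGsurj x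
  have hφcont : Continuous φ := (OrderIso.continuous E.symm)
  set h' : ℝ → ℝ := fun x => Real.sqrt (gg (φ x)) / (2 * Real.sqrt 3) with hh'_def
  have hφder : ∀ x, HasDerivAt φ (h' x) x := by
    intro x
    have h1 := hGder (φ x)
    have h2 : F (φ x) ≠ 0 := (hFpos _).ne'
    have h4 := HasDerivAt.of_local_left_inverse hφcont.continuousAt h1 h2
      (Filter.Eventually.of_forall hGφ)
    have h5 : (F (φ x))⁻¹ = h' x := by
      simp only [hF_def, hh'_def]
      rw [inv_div]
    rwa [h5] at h4
  set p : ℝ := (A - s) / 2 with hp_def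
  set f : ℝ → ℝ := fun x => p + m * Real.sin (φ x) ^ 2 with hf_def
  set f1 : ℝ → ℝ := fun x => m / Real.sqrt 3 *
      (Real.sin (φ x) * Real.cos (φ x) * Real.sqrt (gg (φ x))) with hf1_def
  set f2 : ℝ → ℝ := fun x => m / 6 * ((1 - 2 * Real.sin (φ x) ^ 2) * gg (φ x) +
      m * Real.sin (φ x) ^ 2 * (1 - Real.sin (φ x) ^ 2)) with hf2_def
  have hsin : ∀ x, HasDerivAt (fun x => Real.sin (φ x)) (Real.cos (φ x) * h' x) x :=
    fun x => (Real.hasDerivAt_sin (φ x)).comp x (hφder x)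
  have hcos : ∀ x, HasDerivAt (fun x => Real.cos (φ x)) (-Real.sin (φ x) * h' x) x :=
    fun x => (Real.hasDerivAt_cos (φ x)).comp x (hφder x)
  have hfder : ∀ x, HasDerivAt f (f1 x) x := by
    intro x
    have hraw := (((hsin x).pow 2).const_mul m).const_add p
    refine hraw.congr_deriv (Eq.symm ?_)
    have hrpos : 0 < Real.sqrt (gg (φ x)) := Real.sqrt_pos.mpr (hggpos _)
    simp only [hf1_def, hh'_def, Nat.cast_ofNat, pow_one]
    field_simp
    ring
  have hggder : ∀ x, HasDerivAt (fun x => gg (φ x))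
      (m * ((2:ℕ) * Real.sin (φ x) ^ 1 * (Real.cos (φ x) * h' x))) x :=
    fun x => (((hsin x).pow 2).const_mul m).const_add A
  have hf1der : ∀ x, HasDerivAt f1 (f2 x) x := by
    intro x
    have hsqrt := (Real.hasDerivAt_sqrt (hggpos (φ x)).ne').comp x (hggder x)
    have hraw := (((hsin x).mul (hcos x)).mul hsqrt).const_mul (m / Real.sqrt 3)
    refine hraw.congr_deriv (Eq.symm ?_)
    have hrpos : 0 < Real.sqrt (gg (φ x)) := Real.sqrt_pos.mpr (hggpos _)
    have hpy : Real.sin (φ x) ^ 2 + Real.cos (φ x) ^ 2 = 1 := Real.sin_sq_add_cos_sq _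
    have h3sq : Real.sqrt 3 ^ 2 = 3 := Real.sq_sqrt (by norm_num)
    simp only [hf2_def, hh'_def, Nat.cast_ofNat, pow_one, Function.comp, Pi.mul_apply]
    set r := Real.sqrt (gg (φ x)) with hr_def
    have hr : r ^ 2 = gg (φ x) := Real.sq_sqrt (hggpos _).le
    rw [← hr]
    have hc : Real.cos (φ x) ^ 2 = 1 - Real.sin (φ x) ^ 2 := by linarith
    have e : m / Real.sqrt 3 * ((Real.cos (φ x) * (r / (2 * Real.sqrt 3)) * Real.cos (φ x) +
        Real.sin (φ x) * (-Real.sin (φ x) * (r / (2 * Real.sqrt 3)))) * r +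
        Real.sin (φ x) * Real.cos (φ x) * (1 / (2 * r) * (m * (2 * Real.sin (φ x) *
        (Real.cos (φ x) * (r / (2 * Real.sqrt 3)))))))
        = m / (2 * Real.sqrt 3 ^ 2) * ((Real.cos (φ x) ^ 2 - Real.sin (φ x) ^ 2) * r ^ 2 +
        m * Real.sin (φ x) ^ 2 * Real.cos (φ x) ^ 2) := by
      field_simp
      ring
    rw [e, h3sq, hc]
    ring
  have hf2cont : Continuous f2 := by
    simp only [hf2_def, hgg_def]
    fun_prop
  have hdf : deriv f = f1 := funext fun x => (hfder x).deriv
  have hdf1 : deriv f1 = f2 := funext fun x => (hf1der x).deriv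
  refine ⟨f, ?_, ?_, ?_, ?_⟩
  · -- ContDiff
    rw [show (2 : WithTop ℕ∞) = 1 + 1 by norm_num, contDiff_succ_iff_deriv]
    refine ⟨fun x => (hfder x).differentiableAt, by simp, ?_⟩
    rw [hdf, contDiff_one_iff_deriv, hdf1]
    exact ⟨fun x => (hf1der x).differentiableAt, hf2cont⟩
  · -- periodicity
    intro x
    have hφshift : φ (x + 2 * π) = φ x + π := by
      apply hGmono.injective
      rw [hGφ, hGshift (φ x), hGφ]
    simp only [hf_def, hφshift, Real.sin_add_pi, neg_sq]
  · -- nonconstant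
    refine ⟨G (π/2), 0, ?_⟩
    have h1 : φ (G (π/2)) = π/2 := hφG _
    have h2 : φ 0 = 0 := by nth_rewrite 1 [← hGzero]; exact hφG 0
    simp only [hf_def, h1, h2, Real.sin_pi_div_two, Real.sin_zero]
    intro hcon
    have : m = 0 := by nlinarith [hcon]
    exact hm.ne' this
  · -- the ODE
    intro x
    have hit : iteratedDeriv 2 f = f2 := by
      rw [show (2:ℕ) = 1 + 1 from rfl, iteratedDeriv_succ, iteratedDeriv_one, hdf, hdf1]
    rw [hit]
    simp only [hf2_def, hf_def, hgg_def, hp_def]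
    rw [hms]
    linear_combination (1/24 : ℝ) * hAs

end CnoidalAux

theorem exists_periodic_cnoidal_wave :
    ∃ a₀ : ℝ, 0 < a₀ ∧ ∀ a : ℝ, a₀ ≤ a →
      ∃ f : ℝ → ℝ, ContDiff ℝ 2 f ∧ (∀ x, f (x + 2 * Real.pi) = f x) ∧
        (∃ x y, f x ≠ f y) ∧ ∀ x, iteratedDeriv 2 f x + (f x) ^ 2 / 2 = a := by
  refine ⟨1, one_pos, fun a ha => ?_⟩
  obtain ⟨s, A, m, hA, hm, hAs, hms, hT⟩ := CnoidalAux.exists_param a ha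
  exact CnoidalAux.construct a s A m hA hm hAs hms hT
end
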